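/- Let G be a two-unicast layered network in which no pair of disjoint paths from s_1 to d_1 and from s_2 to d_2 has manageable interference. Let P_22 be a path from s_2 to d_2 and let Q_11 and Z_11 be paths from s_1 to d_1, each disjoint from P_22. Suppose the pair (Q_11,P_22) has (s_1,d_1)-manageable but not (s_2,d_2)-manageable interference, and the pair (Z_11,P_22) has (s_2,d_2)-manageable but not (s_1,d_1)-manageable interference. Then: for the pair (Z_11,P_22), n_1(G[V]) = n_1^D = 1 (exactly one node causes interference on Z_11, and it is a node of P_22 causing direct interference); for the pair (Q_11,P_22), n_2(G[V]) = n_2^D = 1 (exactly one node causes interference on P_22, and it is a node of Q_11 causing direct interference); for the pair (Q_11,P_22), no node of P_22 causes direct interference on Q_11 (n_1^D = 0); and for the pair (Z_11,P_22), no node of Z_11 causes direct interference on P_22 (n_2^D = 0). -/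

import Mathlib

open List

/-- `IsPath E p u w` : the nonempty list `p` of vertices is a directed path
from `u` to `w` with respect to the edge relation `E`. -/
def IsPath {V : Type*} (E : V → V → Prop) (p : List V) (u w : V) : Prop :=
  p ≠ [] ∧ p.head? = some u ∧ p.getLast? = some w ∧ p.Chain' E

/-- `Reaches E u w` (written `u ~> w`) : there is a directed path from `u` to `w`. -/
def Reaches {V : Type*} (E : V → V → Prop) (u w : V) : Prop :=
  ∃ p, IsPath E p u w

/-- A two-unicast layered network: a finite directed graph, with two sources
`s1, s2` and two destinations `d1, d2` (all four distinct), vertices partitioned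
into layers `1, ..., r` such that every edge goes from a layer to the next one,
the first layer is `{s1, s2}`, the last layer is `{d1, d2}`, and each source
reaches its corresponding destination. -/
structure TwoUnicastNetwork (V : Type*) [Fintype V] where
  E : V → V → Prop
  s1 : V
  s2 : V
  d1 : V
  d2 : V
  r : ℕ
  layer : V → ℕ
  layer_pos : ∀ v, 1 ≤ layer v
  layer_le : ∀ v, layer v ≤ r
  edge_layer : ∀ u w, E u w → layer w = layer u + 1
  s_ne : s1 ≠ s2
  d_ne : d1 ≠ d2
  sd_ne : ∀ s d, (s = s1 ∨ s = s2) → (d = d1 ∨ d = d2) → s ≠ d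
  first_layer : ∀ v, layer v = 1 ↔ v = s1 ∨ v = s2
  last_layer : ∀ v, layer v = r ↔ v = d1 ∨ v = d2
  conn1 : Reaches E s1 d1
  conn2 : Reaches E s2 d2

/-- `InterferesOn N S Ri srcOther v` : within the induced subgraph `G[S]`, the
node `v` causes interference on the path `Ri` : `v ∈ S`, `v ∉ Ri`, there is an
edge (inside `G[S]`) from `v` into a node of `Ri`, and there is a path from the
other source `srcOther` to `v` lying inside `G[S]` and disjoint from `Ri`. -/
def InterferesOn {V : Type*} [Fintype V] (N : TwoUnicastNetwork V) (S : Set V)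
    (Ri : List V) (srcOther : V) (v : V) : Prop :=
  v ∈ S ∧ v ∉ Ri ∧ (∃ w ∈ Ri, w ∈ S ∧ N.E v w) ∧
    ∃ q, IsPath N.E q srcOther v ∧ (∀ x ∈ q, x ∈ S) ∧ ∀ x ∈ q, x ∉ Ri

/-- `n_i(G[S])` : the number of nodes causing interference on `Ri` within the
induced subgraph `G[S]`, the interfering path coming from `srcOther`. -/
noncomputable def nInterf {V : Type*} [Fintype V] (N : TwoUnicastNetwork V)
    (S : Set V) (Ri : List V) (srcOther : V) : ℕ :=
  {v | InterferesOn N S Ri srcOther v}.ncard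

/-- `n_i^D` : the number of nodes of the other path `Rother` causing (direct)
interference on `Ri` in `G`. -/
noncomputable def nDirect {V : Type*} [Fintype V] (N : TwoUnicastNetwork V)
    (Ri Rother : List V) (srcOther : V) : ℕ :=
  {v | InterferesOn N Set.univ Ri srcOther v ∧ v ∈ Rother}.ncard

/-- The pair `(R1, R2)` (paths `s1 → d1` and `s2 → d2`) has manageable
interference: there is `S ⊇ R1 ∪ R2` with `n_1(G[S]) ≠ 1` and `n_2(G[S]) ≠ 1`. -/
def Manageable {V : Type*} [Fintype V] (N : TwoUnicastNetwork V)
    (R1 R2 : List V) : Prop :=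
  ∃ S : Set V, (∀ x ∈ R1, x ∈ S) ∧ (∀ x ∈ R2, x ∈ S) ∧
    nInterf N S R1 N.s2 ≠ 1 ∧ nInterf N S R2 N.s1 ≠ 1

/-- The pair `(R1, R2)` has `(s1,d1)`-manageable interference. -/
def Manageable1 {V : Type*} [Fintype V] (N : TwoUnicastNetwork V)
    (R1 R2 : List V) : Prop :=
  ∃ S : Set V, (∀ x ∈ R1, x ∈ S) ∧ (∀ x ∈ R2, x ∈ S) ∧ nInterf N S R1 N.s2 ≠ 1

/-- The pair `(R1, R2)` has `(s2,d2)`-manageable interference. -/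
def Manageable2 {V : Type*} [Fintype V] (N : TwoUnicastNetwork V)
    (R1 R2 : List V) : Prop :=
  ∃ S : Set V, (∀ x ∈ R1, x ∈ S) ∧ (∀ x ∈ R2, x ∈ S) ∧ nInterf N S R2 N.s1 ≠ 1

/-- Removal of the vertex `v` disconnects `a` from `b` :
every path from `a` to `b` contains `v`. -/
def CutVert {V : Type*} [Fintype V] (N : TwoUnicastNetwork V) (v a b : V) : Prop :=
  ∀ p, IsPath N.E p a b → v ∈ p



section Statement17Aux

variable {V : Type*} [Fintype V]

lemma aux_mem_of_head?_eq {α : Type*} {l : List α} {a : α} (h : l.head? = some a) : a ∈ l := by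
  cases l with
  | nil => simp at h
  | cons b t =>
    simp only [List.head?_cons, Option.some.injEq] at h
    subst h
    exact List.mem_cons_self

lemma aux_mem_of_getLast?_eq {α : Type*} {l : List α} {a : α} (h : l.getLast? = some a) :
    a ∈ l := by
  obtain ⟨hne, rfl⟩ := List.mem_getLast?_eq_getLast (show a ∈ l.getLast? from h)
  exact List.getLast_mem hne

lemma aux_getLast?_concat {α : Type*} (l : List α) (a : α) :
    (l ++ [a]).getLast? = some a := by
  rw [List.getLast?_append_cons]
  rfl

lemma aux_isPath_prefix {E : V → V → Prop} {p : List V} {a b x : V}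
    (hp : IsPath E p a b) (hx : x ∈ p) :
    ∃ l1 l2, p = (l1 ++ [x]) ++ l2 ∧ IsPath E (l1 ++ [x]) a x := by
  obtain ⟨l1, l2, rfl⟩ := List.append_of_mem hx
  have hsplit : l1 ++ x :: l2 = (l1 ++ [x]) ++ l2 := by simp
  refine ⟨l1, l2, hsplit, by simp, ?_, aux_getLast?_concat _ _, ?_⟩
  · have := hp.2.1
    rw [hsplit, List.head?_append_of_ne_nil _ (by simp)] at this
    exact this
  · have := hp.2.2.2
    rw [hsplit] at this
    exact (List.isChain_append.mp this).1

lemma aux_isPath_suffix {E : V → V → Prop} {p : List V} {a b x : V}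
    (hp : IsPath E p a b) (hx : x ∈ p) :
    ∃ l1 l2, p = l1 ++ x :: l2 ∧ IsPath E (x :: l2) x b := by
  obtain ⟨l1, l2, rfl⟩ := List.append_of_mem hx
  refine ⟨l1, l2, rfl, by simp, by simp, ?_, ?_⟩
  · have := hp.2.2.1
    rwa [List.getLast?_append_cons] at this
  · exact (List.isChain_append.mp hp.2.2.2).2.1

lemma aux_split3 {α : Type*} : ∀ (A : List α) (pre : List α) (B suf : List α) (u z : α),
    A ++ B = pre ++ u :: z :: suf →
    (∃ C, pre = A ++ C ∧ B = C ++ u :: z :: suf) ∨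
    (A = pre ++ [u] ∧ B = z :: suf) ∨
    (∃ D, A = pre ++ u :: z :: D) := by
  intro A
  induction A with
  | nil =>
    intro pre B suf u z h
    simp only [List.nil_append] at h
    exact Or.inl ⟨pre, rfl, h⟩
  | cons a A ih =>
    intro pre B suf u z h
    cases pre with
    | nil =>
      simp only [List.nil_append, List.cons_append] at h
      injection h with h1 h2
      subst h1
      cases A with
      | nil =>
        simp only [List.nil_append] at h2
        exact Or.inr (Or.inl ⟨by simp, h2⟩)
      | cons a2 A2 =>
        rw [List.cons_append] at h2
        injection h2 with h3 h4
        subst h3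
        exact Or.inr (Or.inr ⟨A2, by simp⟩)
    | cons pp pre' =>
      rw [List.cons_append, List.cons_append] at h
      injection h with h1 h2
      subst h1
      rcases ih pre' B suf u z h2 with ⟨C, h3, h4⟩ | ⟨h3, h4⟩ | ⟨D, h3⟩
      · exact Or.inl ⟨C, by rw [List.cons_append, h3], h4⟩
      · exact Or.inr (Or.inl ⟨by rw [List.cons_append, h3], h4⟩)
      · exact Or.inr (Or.inr ⟨D, by rw [List.cons_append, h3]⟩)

lemma aux_firstCross {E : V → V → Prop} (Z : V → Prop) :
    ∀ (W : List V), W.Chain' E → ∀ w0, W.head? = some w0 → ¬ Z w0 →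
    (∃ y ∈ W, Z y) →
    ∃ pre u z suf, W = pre ++ u :: z :: suf ∧ (∀ x ∈ pre, ¬ Z x) ∧ ¬ Z u ∧ Z z ∧ E u z := by
  classical
  intro W
  induction W with
  | nil => intro _ w0 h; simp at h
  | cons w rest ih =>
    intro hc w0 hw0 hZw0 hy
    obtain rfl : w = w0 := by simpa using hw0
    obtain ⟨y, hyW, hZy⟩ := hy
    have hyrest : y ∈ rest := by
      rcases List.mem_cons.mp hyW with rfl | h
      · exact absurd hZy hZw0
      · exact h
    cases rest with
    | nil => simp at hyrest
    | cons b rest' =>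
      have hEwb : E w b := (List.isChain_cons_cons.mp hc).1
      by_cases hZb : Z b
      · exact ⟨[], w, b, rest', rfl, by simp, hZw0, hZb, hEwb⟩
      · obtain ⟨pre, u, z, suf, heq, hpre, hu, hz, hE⟩ :=
          ih (List.isChain_cons_cons.mp hc).2 b rfl hZb ⟨y, hyrest, hZy⟩
        refine ⟨w :: pre, u, z, suf, by rw [List.cons_append, ← heq], ?_, hu, hz, hE⟩
        intro x hx
        rcases List.mem_cons.mp hx with rfl | hx
        · exact hZw0
        · exact hpre x hx

lemma aux_layer_cons (N : TwoUnicastNetwork V) :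
    ∀ (q : List V) (a : V), (a :: q).Chain' N.E → ∀ (i : ℕ) (hi : i < (a :: q).length),
      N.layer ((a :: q)[i]) = N.layer a + i := by
  intro q
  induction q with
  | nil =>
    intro a _ i hi
    simp only [List.length_cons, List.length_nil] at hi
    interval_cases i
    simp
  | cons b q' ih =>
    intro a hc i hi
    cases i with
    | zero => simp
    | succ n =>
      have hi' : n < (b :: q').length := by
        simp only [List.length_cons] at hi ⊢
        omega
      have h1 : (a :: b :: q')[n + 1]'hi = (b :: q')[n]'hi' := rfl
      have hb := N.edge_layer a b (List.isChain_cons_cons.mp hc).1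
      rw [h1, ih b (List.isChain_cons_cons.mp hc).2 n hi', hb]
      omega

lemma aux_layer_inj (N : TwoUnicastNetwork V) {p : List V} (hc : p.Chain' N.E)
    {x y : V} (hx : x ∈ p) (hy : y ∈ p) (hl : N.layer x = N.layer y) : x = y := by
  cases p with
  | nil => simp at hx
  | cons a q =>
    obtain ⟨i, hi, rfl⟩ := List.mem_iff_getElem.mp hx
    obtain ⟨j, hj, rfl⟩ := List.mem_iff_getElem.mp hy
    rw [aux_layer_cons N q a hc i hi, aux_layer_cons N q a hc j hj] at hl
    have : i = j := by omega
    subst this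
    rfl

lemma aux_eq_of_subset_ncard_one {α : Type*} {A B : Set α} (hAB : A ⊆ B)
    (hA : A.ncard = 1) (hB : B.ncard = 1) : A = B := by
  obtain ⟨a, rfl⟩ := Set.ncard_eq_one.mp hA
  obtain ⟨b, rfl⟩ := Set.ncard_eq_one.mp hB
  have : a ∈ ({b} : Set α) := hAB rfl
  simp_all

lemma aux_empty_of_subset_ncard_one {α : Type*} [Fintype α] {A B : Set α} (hAB : A ⊆ B)
    (hB : B.ncard = 1) (hA : A.ncard ≠ 1) : A = ∅ := by
  have h1 : A.ncard ≤ 1 := hB ▸ Set.ncard_le_ncard hAB (Set.toFinite B)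
  have h0 : A.ncard = 0 := by omega
  exact (Set.ncard_eq_zero (Set.toFinite A)).mp h0

lemma aux_interferesOn_mono {N : TwoUnicastNetwork V} {S S' : Set V} {Ri : List V} {src v : V}
    (hSS : S ⊆ S') (h : InterferesOn N S Ri src v) : InterferesOn N S' Ri src v := by
  obtain ⟨h1, h2, ⟨w, hw1, hw2, hw3⟩, q, hq1, hq2, hq3⟩ := h
  exact ⟨hSS h1, h2, ⟨w, hw1, hSS hw2, hw3⟩, q, hq1, fun x hx => hSS (hq2 x hx), hq3⟩

end Statement17Aux

theorem statement17 {V : Type*} [Fintype V]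
    (N : TwoUnicastNetwork V)
    (P22 Q11 Z11 : List V)
    (hP22 : IsPath N.E P22 N.s2 N.d2)
    (hQ11 : IsPath N.E Q11 N.s1 N.d1)
    (hZ11 : IsPath N.E Z11 N.s1 N.d1)
    (hQdisj : Q11.Disjoint P22)
    (hZdisj : Z11.Disjoint P22)
    (hNoMan : ∀ R1 R2 : List V, IsPath N.E R1 N.s1 N.d1 → IsPath N.E R2 N.s2 N.d2 →
      R1.Disjoint R2 → ¬ Manageable N R1 R2)
    (hQ1 : Manageable1 N Q11 P22)
    (hQ2 : ¬ Manageable2 N Q11 P22)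
    (hZ2 : Manageable2 N Z11 P22)
    (hZ1 : ¬ Manageable1 N Z11 P22) :
    (nInterf N Set.univ Z11 N.s2 = 1 ∧ nDirect N Z11 P22 N.s2 = 1) ∧
    (nInterf N Set.univ P22 N.s1 = 1 ∧ nDirect N P22 Q11 N.s1 = 1) ∧
    nDirect N Q11 P22 N.s2 = 0 ∧
    nDirect N P22 Z11 N.s1 = 0 := by
  classical
  -- "= 1 for every admissible S" forms of the two non-manageability hypotheses
  have hQ2' : ∀ S : Set V, (∀ x ∈ Q11, x ∈ S) → (∀ x ∈ P22, x ∈ S) →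
      {v | InterferesOn N S P22 N.s1 v}.ncard = 1 := by
    intro S h1 h2
    by_contra hne
    exact hQ2 ⟨S, h1, h2, hne⟩
  have hZ1' : ∀ S : Set V, (∀ x ∈ Z11, x ∈ S) → (∀ x ∈ P22, x ∈ S) →
      {v | InterferesOn N S Z11 N.s2 v}.ncard = 1 := by
    intro S h1 h2
    by_contra hne
    exact hZ1 ⟨S, h1, h2, hne⟩
  -- basic membership facts
  have hs2P : N.s2 ∈ P22 := aux_mem_of_head?_eq hP22.2.1
  have hd1Z : N.d1 ∈ Z11 := aux_mem_of_getLast?_eq hZ11.2.2.1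
  have hs2Z : N.s2 ∉ Z11 := fun h => hZdisj h hs2P
  -- Conclusion 2 : on P22
  have concl2a : {v | InterferesOn N Set.univ P22 N.s1 v}.ncard = 1 :=
    hQ2' Set.univ (fun x _ => trivial) (fun x _ => trivial)
  have hB0 : {v | InterferesOn N {x | x ∈ Q11 ∨ x ∈ P22} P22 N.s1 v}.ncard = 1 :=
    hQ2' _ (fun x hx => Or.inl hx) (fun x hx => Or.inr hx)
  have hB0sub : {v | InterferesOn N {x | x ∈ Q11 ∨ x ∈ P22} P22 N.s1 v} ⊆
      {v | InterferesOn N Set.univ P22 N.s1 v} :=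
    fun v hv => aux_interferesOn_mono (fun x _ => trivial) hv
  have hBeq := aux_eq_of_subset_ncard_one hB0sub hB0 concl2a
  have concl2b : {v | InterferesOn N Set.univ P22 N.s1 v ∧ v ∈ Q11}.ncard = 1 := by
    have : {v | InterferesOn N Set.univ P22 N.s1 v ∧ v ∈ Q11} =
        {v | InterferesOn N Set.univ P22 N.s1 v} := by
      ext v
      constructor
      · exact fun h => h.1
      · intro hv
        refine ⟨hv, ?_⟩
        have hv0 : v ∈ {v | InterferesOn N {x | x ∈ Q11 ∨ x ∈ P22} P22 N.s1 v} := by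
          rw [hBeq]
          exact hv
        rcases hv0.1 with h | h
        · exact h
        · exact absurd h hv0.2.1
    rw [this]
    exact concl2a
  -- Conclusion 1 : on Z11
  have concl1a : {v | InterferesOn N Set.univ Z11 N.s2 v}.ncard = 1 :=
    hZ1' Set.univ (fun x _ => trivial) (fun x _ => trivial)
  have hC0 : {v | InterferesOn N {x | x ∈ Z11 ∨ x ∈ P22} Z11 N.s2 v}.ncard = 1 :=
    hZ1' _ (fun x hx => Or.inl hx) (fun x hx => Or.inr hx)
  have hC0sub : {v | InterferesOn N {x | x ∈ Z11 ∨ x ∈ P22} Z11 N.s2 v} ⊆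
      {v | InterferesOn N Set.univ Z11 N.s2 v} :=
    fun v hv => aux_interferesOn_mono (fun x _ => trivial) hv
  have hCeq := aux_eq_of_subset_ncard_one hC0sub hC0 concl1a
  have concl1b : {v | InterferesOn N Set.univ Z11 N.s2 v ∧ v ∈ P22}.ncard = 1 := by
    have : {v | InterferesOn N Set.univ Z11 N.s2 v ∧ v ∈ P22} =
        {v | InterferesOn N Set.univ Z11 N.s2 v} := by
      ext v
      constructor
      · exact fun h => h.1
      · intro hv
        refine ⟨hv, ?_⟩
        have hv0 : v ∈ {v | InterferesOn N {x | x ∈ Z11 ∨ x ∈ P22} Z11 N.s2 v} := by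
          rw [hCeq]
          exact hv
        rcases hv0.1 with h | h
        · exact absurd h hv0.2.1
        · exact h
    rw [this]
    exact concl1a
  -- the unique node β of P22 entering Z11
  obtain ⟨β, hβset⟩ := Set.ncard_eq_one.mp hC0
  have hβI : InterferesOn N {x | x ∈ Z11 ∨ x ∈ P22} Z11 N.s2 β := by
    have : β ∈ ({β} : Set V) := rfl
    rw [← hβset] at this
    exact this
  obtain ⟨hβS, hβZ, ⟨wβ, hwβZ, -, hEβ⟩, -⟩ := hβI
  have hβP : β ∈ P22 := hβS.resolve_left hβZ
  -- F10 : global uniqueness of the entry point into Z11 from s2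
  have F10 : ∀ u, u ∉ Z11 → (∃ w ∈ Z11, N.E u w) →
      (∃ q, IsPath N.E q N.s2 u ∧ ∀ x ∈ q, x ∉ Z11) → u = β := by
    intro u huZ hw hq
    obtain ⟨w, hwZ, hEuw⟩ := hw
    obtain ⟨q, hqpath, hqZ⟩ := hq
    by_contra hne
    obtain ⟨l1, l2, hPsplit, hPpre⟩ := aux_isPath_prefix hP22 hβP
    have hpremem : ∀ x ∈ l1 ++ [β], x ∈ P22 := by
      intro x hx
      rw [hPsplit]
      exact List.mem_append.mpr (Or.inl hx)
    have h1 := hZ1' {x | x ∈ Z11 ∨ x ∈ P22 ∨ x ∈ q}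
      (fun x hx => Or.inl hx) (fun x hx => Or.inr (Or.inl hx))
    have huI : InterferesOn N {x | x ∈ Z11 ∨ x ∈ P22 ∨ x ∈ q} Z11 N.s2 u :=
      ⟨Or.inr (Or.inr (aux_mem_of_getLast?_eq hqpath.2.2.1)), huZ,
        ⟨w, hwZ, Or.inl hwZ, hEuw⟩,
        q, hqpath, fun x hx => Or.inr (Or.inr hx), hqZ⟩
    have hβI' : InterferesOn N {x | x ∈ Z11 ∨ x ∈ P22 ∨ x ∈ q} Z11 N.s2 β :=
      ⟨Or.inr (Or.inl hβP), hβZ, ⟨wβ, hwβZ, Or.inl hwβZ, hEβ⟩,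
        l1 ++ [β], hPpre, fun x hx => Or.inr (Or.inl (hpremem x hx)),
        fun x hx h => hZdisj h (hpremem x hx)⟩
    obtain ⟨c, hc⟩ := Set.ncard_eq_one.mp h1
    have h2 : u = c := by
      have : u ∈ {v | InterferesOn N {x | x ∈ Z11 ∨ x ∈ P22 ∨ x ∈ q} Z11 N.s2 v} := huI
      rw [hc] at this
      exact this
    have h3 : β = c := by
      have : β ∈ {v | InterferesOn N {x | x ∈ Z11 ∨ x ∈ P22 ∨ x ∈ q} Z11 N.s2 v} := hβI'
      rw [hc] at this
      exact this
    exact hne (h2.trans h3.symm)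
  -- Goal 4 : no node of Z11 interferes directly on P22
  obtain ⟨S2, hS2Z, hS2P, hS2ne⟩ := hZ2
  have hBS2' : {v | InterferesOn N (S2 ∪ {x | x ∈ Q11}) P22 N.s1 v}.ncard = 1 :=
    hQ2' _ (fun x hx => Or.inr hx) (fun x hx => Or.inl (hS2P x hx))
  have hBS2sub : {v | InterferesOn N S2 P22 N.s1 v} ⊆
      {v | InterferesOn N (S2 ∪ {x | x ∈ Q11}) P22 N.s1 v} :=
    fun v hv => aux_interferesOn_mono Set.subset_union_left hv
  have hBS2empty : {v | InterferesOn N S2 P22 N.s1 v} = ∅ :=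
    aux_empty_of_subset_ncard_one hBS2sub hBS2' hS2ne
  have goal4 : {v | InterferesOn N Set.univ P22 N.s1 v ∧ v ∈ Z11}.ncard = 0 := by
    have hempty : {v | InterferesOn N Set.univ P22 N.s1 v ∧ v ∈ Z11} = ∅ := by
      apply Set.eq_empty_iff_forall_notMem.mpr
      rintro v ⟨hvI, hvZ⟩
      obtain ⟨-, hvP, ⟨w, hwP, -, hEvw⟩, -⟩ := hvI
      obtain ⟨l1, l2, hZsplit, hZpre⟩ := aux_isPath_prefix hZ11 hvZ
      have hpremem : ∀ x ∈ l1 ++ [v], x ∈ Z11 := by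
        intro x hx
        rw [hZsplit]
        exact List.mem_append.mpr (Or.inl hx)
      have hvI2 : InterferesOn N S2 P22 N.s1 v :=
        ⟨hS2Z v hvZ, hvP, ⟨w, hwP, hS2P w hwP, hEvw⟩,
          l1 ++ [v], hZpre, fun x hx => hS2Z x (hpremem x hx),
          fun x hx h => hZdisj (hpremem x hx) h⟩
      have : v ∈ {v | InterferesOn N S2 P22 N.s1 v} := hvI2
      rw [hBS2empty] at this
      exact this
    rw [hempty]
    exact Set.ncard_empty V
  -- Goal 3 : no node of P22 interferes directly on Q11
  have goal3 : {v | InterferesOn N Set.univ Q11 N.s2 v ∧ v ∈ P22}.ncard = 0 := by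
    have hempty : {v | InterferesOn N Set.univ Q11 N.s2 v ∧ v ∈ P22} = ∅ := by
      apply Set.eq_empty_iff_forall_notMem.mpr
      rintro v ⟨hvI, hvP⟩
      obtain ⟨-, hvQ, ⟨w, hwQ, -, hEvw⟩, -⟩ := hvI
      -- prefix of P22 up to v
      obtain ⟨p1, p2, hPsplit, hPpre⟩ := aux_isPath_prefix hP22 hvP
      have hp1mem : ∀ x ∈ p1 ++ [v], x ∈ P22 := by
        intro x hx
        rw [hPsplit]
        exact List.mem_append.mpr (Or.inl hx)
      -- suffix of Q11 from w
      obtain ⟨m1, m2, hQsplit, hQsuf⟩ := aux_isPath_suffix hQ11 hwQ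
      have hsufmem : ∀ x ∈ w :: m2, x ∈ Q11 := by
        intro x hx
        rw [hQsplit]
        exact List.mem_append.mpr (Or.inr hx)
      -- the walk W0 = (P22-prefix to v) ++ (Q11-suffix from w)
      have hW0chain : ((p1 ++ [v]) ++ (w :: m2)).Chain' N.E := by
        refine List.isChain_append.mpr ?_
        refine ⟨hPpre.2.2.2, hQsuf.2.2.2, ?_⟩
        intro x hx y hy
        rw [aux_getLast?_concat] at hx
        simp only [List.head?_cons, Option.mem_def, Option.some.injEq] at hx hy
        rw [← hx, ← hy]
        exact hEvw
      have hW0head : ((p1 ++ [v]) ++ (w :: m2)).head? = some N.s2 := by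
        rw [List.head?_append_of_ne_nil _ (by simp)]
        exact hPpre.2.1
      have hd1W0 : N.d1 ∈ (p1 ++ [v]) ++ (w :: m2) :=
        List.mem_append.mpr (Or.inr (aux_mem_of_getLast?_eq hQsuf.2.2.1))
      obtain ⟨pre, u, z, suf, heq0, hpreZ, huZ, hzZ, hEuz⟩ :=
        aux_firstCross (fun x => x ∈ Z11) _ hW0chain N.s2 hW0head hs2Z ⟨N.d1, hd1W0, hd1Z⟩
      have hupath : IsPath N.E (pre ++ [u]) N.s2 u := by
        refine ⟨by simp, ?_, aux_getLast?_concat _ _, ?_⟩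
        · have h := hW0head
          rw [heq0, show pre ++ u :: z :: suf = (pre ++ [u]) ++ (z :: suf) by simp,
            List.head?_append_of_ne_nil _ (by simp)] at h
          exact h
        · have h := hW0chain
          rw [heq0, show pre ++ u :: z :: suf = (pre ++ [u]) ++ (z :: suf) by simp] at h
          exact (List.isChain_append.mp h).1
      have huβ : u = β := by
        refine F10 u huZ ⟨z, hzZ, hEuz⟩ ⟨pre ++ [u], hupath, ?_⟩
        intro x hx
        rcases List.mem_append.mp hx with h | h
        · exact hpreZ x h
        · have : x = u := by simpa using h
          rw [this]
          exact huZ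
      rcases aux_split3 (p1 ++ [v]) pre (w :: m2) suf u z heq0 with
        ⟨C, hC1, hC2⟩ | ⟨hA, hB⟩ | ⟨D, hD⟩
      · -- u would lie on Q11 although u = β ∈ P22
        have huB : u ∈ w :: m2 := by
          rw [hC2]
          exact List.mem_append.mpr (Or.inr (by simp))
        exact hQdisj (hsufmem u huB) (huβ ▸ hβP)
      · -- main case : v = u = β and w = z ∈ Z11
        have hvu : v = u := by
          have h1 : (p1 ++ [v]).getLast? = some v := aux_getLast?_concat _ _
          rw [hA, aux_getLast?_concat] at h1
          injection h1 with h1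
          exact h1.symm
        have hwz : w = z := by
          injection hB with h1 h2
        have hwZ11 : w ∈ Z11 := by
          rw [hwz]
          exact hzZ
        have hvβ : v = β := hvu.trans huβ
        -- second interferer on Q11 from the Manageable1 witness
        obtain ⟨S1, hS1Q, hS1P, hS1ne⟩ := hQ1
        have hvI1 : InterferesOn N S1 Q11 N.s2 v :=
          ⟨hS1P v hvP, hvQ, ⟨w, hwQ, hS1Q w hwQ, hEvw⟩,
            p1 ++ [v], hPpre, fun x hx => hS1P x (hp1mem x hx),
            fun x hx h => hQdisj h (hp1mem x hx)⟩
        have hpos : 0 < ({v | InterferesOn N S1 Q11 N.s2 v}).ncard :=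
          (Set.ncard_pos (Set.toFinite _)).mpr ⟨v, hvI1⟩
        have hne1 : ({v | InterferesOn N S1 Q11 N.s2 v}).ncard ≠ 1 := hS1ne
        have h2lt : 1 < ({v | InterferesOn N S1 Q11 N.s2 v}).ncard := by omega
        obtain ⟨a, haI, hav⟩ := Set.exists_ne_of_one_lt_ncard h2lt v
        obtain ⟨-, haQ, ⟨wa, hwaQ, -, hEawa⟩, q, hqpath, -, hqQ⟩ := haI
        obtain ⟨k1, k2, hQsplit2, hQsuf2⟩ := aux_isPath_suffix hQ11 hwaQ
        have hsufmem2 : ∀ x ∈ wa :: k2, x ∈ Q11 := by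
          intro x hx
          rw [hQsplit2]
          exact List.mem_append.mpr (Or.inr hx)
        have hWchain : (q ++ (wa :: k2)).Chain' N.E := by
          refine List.isChain_append.mpr ?_
          refine ⟨hqpath.2.2.2, hQsuf2.2.2.2, ?_⟩
          intro x hx y hy
          rw [hqpath.2.2.1] at hx
          simp only [List.head?_cons, Option.mem_def, Option.some.injEq] at hx hy
          rw [← hx, ← hy]
          exact hEawa
        have hWhead : (q ++ (wa :: k2)).head? = some N.s2 := by
          rw [List.head?_append_of_ne_nil _ hqpath.1]
          exact hqpath.2.1
        have hd1W : N.d1 ∈ q ++ (wa :: k2) :=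
          List.mem_append.mpr (Or.inr (aux_mem_of_getLast?_eq hQsuf2.2.2.1))
        obtain ⟨pre2, u2, z2, suf2, heq2, hpre2Z, hu2Z, hz2Z, hEu2z2⟩ :=
          aux_firstCross (fun x => x ∈ Z11) _ hWchain N.s2 hWhead hs2Z ⟨N.d1, hd1W, hd1Z⟩
        have hu2path : IsPath N.E (pre2 ++ [u2]) N.s2 u2 := by
          refine ⟨by simp, ?_, aux_getLast?_concat _ _, ?_⟩
          · have h := hWhead
            rw [heq2, show pre2 ++ u2 :: z2 :: suf2 = (pre2 ++ [u2]) ++ (z2 :: suf2) by simp,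
              List.head?_append_of_ne_nil _ (by simp)] at h
            exact h
          · have h := hWchain
            rw [heq2, show pre2 ++ u2 :: z2 :: suf2 = (pre2 ++ [u2]) ++ (z2 :: suf2) by simp] at h
            exact (List.isChain_append.mp h).1
        have hu2β : u2 = β := by
          refine F10 u2 hu2Z ⟨z2, hz2Z, hEu2z2⟩ ⟨pre2 ++ [u2], hu2path, ?_⟩
          intro x hx
          rcases List.mem_append.mp hx with h | h
          · exact hpre2Z x h
          · have : x = u2 := by simpa using h
            rw [this]
            exact hu2Z
        have hu2v : u2 = v := hu2β.trans hvβ.symm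
        rcases aux_split3 q pre2 (wa :: k2) suf2 u2 z2 heq2 with
          ⟨C, hC1, hC2⟩ | ⟨hA2, hB2⟩ | ⟨D, hD2⟩
        · -- u2 would lie on Q11 although u2 = v ∈ P22
          have hu2B : u2 ∈ wa :: k2 := by
            rw [hC2]
            exact List.mem_append.mpr (Or.inr (by simp))
          exact hvQ (hu2v ▸ hsufmem2 u2 hu2B)
        · -- a = u2 = v contradicts a ≠ v
          have h1 : q.getLast? = some a := hqpath.2.2.1
          rw [hA2, aux_getLast?_concat] at h1
          injection h1 with h1
          exact hav (h1.symm.trans hu2v)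
        · -- z2 ∈ q enters Z11 at layer (layer v + 1), so z2 = w ∈ Q11, contradiction
          have hz2q : z2 ∈ q := by
            rw [hD2]
            simp
          have hz2Q : z2 ∉ Q11 := hqQ z2 hz2q
          have hl1 : N.layer z2 = N.layer v + 1 := by
            rw [← hu2v]
            exact N.edge_layer u2 z2 hEu2z2
          have hl2 : N.layer w = N.layer v + 1 := N.edge_layer v w hEvw
          have hz2w : z2 = w := aux_layer_inj N hZ11.2.2.2 hz2Z hwZ11 (hl1.trans hl2.symm)
          exact hz2Q (hz2w ▸ hwQ)
      · -- z would lie on P22 although z ∈ Z11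
        have hzA : z ∈ p1 ++ [v] := by
          rw [hD]
          simp
        exact hZdisj hzZ (hp1mem z hzA)
    rw [hempty]
    exact Set.ncard_empty V
  exact ⟨⟨concl1a, concl1b⟩, ⟨concl2a, concl2b⟩, goal3, goal4⟩
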